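/- Let f : ℕ → ℂ be a multiplicative function with |f| ≤ 1, and suppose f has mean value zero along every infinite arithmetic progression, i.e., lim_{N→∞} E_{n∈[N]} f(an+b) = 0 for all a, b ∈ ℕ. Then for every Dirichlet character χ, lim_{N→∞} E_{n∈[N]} f(n)·χ(n) = 0. Conversely, if f·χ has mean zero for every Dirichlet character χ, then E_{n∈[N]} f(n)·e(np/q) → 0 for all p, q ∈ ℕ, and hence f has mean zero along every infinite arithmetic progression. -/

import Mathlib

open Finset Filter

lemma aux_norm_sum_le {M : ℕ} {g : ℕ → ℂ} (h : ∀ n, ‖g n‖ ≤ 1) :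
    ‖∑ n ∈ Icc 1 M, g n‖ ≤ (M : ℝ) := by
  calc ‖∑ n ∈ Icc 1 M, g n‖ ≤ ∑ n ∈ Icc 1 M, ‖g n‖ := norm_sum_le _ _
    _ ≤ ∑ n ∈ Icc 1 M, 1 := Finset.sum_le_sum fun n _ => h n
    _ = (M : ℝ) := by simp

lemma aux_tendsto_comp (g : ℕ → ℂ) (c : ℕ)
    (hLip : ∀ M : ℕ, ‖g M‖ ≤ (M : ℝ))
    (htend : Tendsto (fun M : ℕ => g M / (M : ℂ)) atTop (nhds 0))
    (u : ℕ → ℕ) (hu : ∀ N, u N ≤ c * N + c) :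
    Tendsto (fun N : ℕ => g (u N) / (N : ℂ)) atTop (nhds 0) := by
  rw [NormedAddCommGroup.tendsto_nhds_zero] at htend ⊢
  intro ε hε
  have hc1 : (0:ℝ) < c + 1 := by positivity
  set ε' : ℝ := ε / (2 * (c + 1)) with hε'def
  have hε' : 0 < ε' := by positivity
  obtain ⟨M₀, hM₀⟩ := (htend ε' hε').exists_forall_of_atTop
  -- uniform bound : ∀ M, ‖g M‖ ≤ (max M₀ 1) + ε' * M
  have key : ∀ M : ℕ, ‖g M‖ ≤ (max M₀ 1 : ℕ) + ε' * M := by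
    intro M
    rcases le_or_gt (max M₀ 1) M with hM | hM
    · have h1 : (1:ℕ) ≤ M := le_trans (le_max_right _ _) hM
      have h0 : M₀ ≤ M := le_trans (le_max_left _ _) hM
      have := hM₀ M h0
      have hMpos : (0:ℝ) < M := by exact_mod_cast h1
      rw [norm_div, Complex.norm_natCast] at this
      have : ‖g M‖ < ε' * M := by
        rw [div_lt_iff₀ hMpos] at this; linarith
      nlinarith [Nat.cast_nonneg (α := ℝ) (max M₀ 1)]
    · have : ‖g M‖ ≤ (M:ℝ) := hLip M
      have h2 : (M:ℝ) ≤ ((max M₀ 1 : ℕ) : ℝ) := by exact_mod_cast hM.le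
      nlinarith [mul_nonneg hε'.le (Nat.cast_nonneg (α := ℝ) M)]
  -- now conclude
  have hhalf : ε' * (c + 1) ≤ ε / 2 := by
    rw [hε'def]; rw [div_mul_eq_mul_div]
    rw [div_le_div_iff₀ (by positivity) (by norm_num)]
    ring_nf; nlinarith
  obtain ⟨N₁, hN₁⟩ := exists_nat_gt ((((max M₀ 1 : ℕ) : ℝ) + ε' * c) / (ε / 2))
  filter_upwards [eventually_ge_atTop (max N₁ 1)] with N hN
  have hN1 : (1:ℕ) ≤ N := le_trans (le_max_right _ _) hN
  have hNpos : (0:ℝ) < N := by exact_mod_cast hN1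
  rw [norm_div, Complex.norm_natCast, div_lt_iff₀ hNpos]
  have h3 : ‖g (u N)‖ ≤ (max M₀ 1 : ℕ) + ε' * (c * N + c) := by
    have := key (u N)
    have h4 : (u N : ℝ) ≤ c * N + c := by exact_mod_cast hu N
    nlinarith
  have hNN1 : (N₁ : ℝ) ≤ N := by exact_mod_cast le_trans (le_max_left _ _) hN
  have h5 : ((max M₀ 1 : ℕ) : ℝ) + ε' * c < (ε / 2) * N := by
    rw [div_lt_iff₀ (by positivity)] at hN₁
    calc ((max M₀ 1 : ℕ) : ℝ) + ε' * c < (ε/2) * N₁ := by linarith [hN₁]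
      _ ≤ (ε/2) * N := by nlinarith
  have h6 : ε' * (c * N) ≤ (ε/2) * N := by nlinarith
  calc ‖g (u N)‖ ≤ ((max M₀ 1 : ℕ) : ℝ) + ε' * c + ε' * (c * N) := by nlinarith
    _ < (ε/2) * N + (ε/2) * N := by linarith
    _ = ε * N := by ring

/-- the `q`-smooth part of `n` -/
def smPart (q n : ℕ) : ℕ := Nat.gcd n (q ^ n)

lemma smPart_dvd (q n : ℕ) : smPart q n ∣ n := Nat.gcd_dvd_left _ _

lemma smPart_pos {q n : ℕ} (hn : n ≠ 0) : 0 < smPart q n := by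
  have : smPart q n ≠ 0 := fun h => hn (Nat.gcd_eq_zero_iff.mp h).1
  exact Nat.pos_of_ne_zero this

lemma smPart_mem {q n : ℕ} (hq : q ≠ 0) (hn : n ≠ 0) :
    smPart q n ∈ Nat.factoredNumbers q.primeFactors := by
  rw [Nat.mem_factoredNumbers']
  intro p hp hpd
  have hpq : p ∣ q := hp.dvd_of_dvd_pow (hpd.trans (Nat.gcd_dvd_right _ _))
  exact Nat.mem_primeFactors.mpr ⟨hp, hpq, hq⟩

lemma dvd_pow_of_factored {q d k : ℕ} (hq : q ≠ 0)
    (hd : d ∈ Nat.factoredNumbers q.primeFactors) (hk : d ≤ k) : d ∣ q ^ k := by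
  have hd0 : d ≠ 0 := Nat.ne_zero_of_mem_factoredNumbers hd
  rw [← Nat.factorization_le_iff_dvd hd0 (pow_ne_zero _ hq), Finsupp.le_def]
  intro p
  rcases Nat.eq_zero_or_pos (d.factorization p) with h0 | hpos
  · simp [h0]
  · have hp : p.Prime := Nat.prime_of_mem_primeFactors
      ((Nat.support_factorization d) ▸ Finsupp.mem_support_iff.mpr hpos.ne')
    have hpd : p ∣ d := Nat.dvd_of_factorization_pos hpos.ne'
    have hpq : p ∣ q :=
      (Nat.mem_primeFactors.mp ((Nat.mem_factoredNumbers'.mp hd) p hp hpd)).2.1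
    have h1 : 1 ≤ q.factorization p := hp.factorization_pos_of_dvd hq hpq
    have h2 : d.factorization p < d := Nat.factorization_lt p hd0
    rw [Nat.factorization_pow]
    calc d.factorization p ≤ k := le_trans (Nat.le_of_lt h2) hk
      _ = k * 1 := (mul_one k).symm
      _ ≤ k * q.factorization p := Nat.mul_le_mul_left k h1
      _ = (k • q.factorization) p := by simp [mul_comm]

lemma smPart_coprime {q n : ℕ} (hq : q ≠ 0) (hn : n ≠ 0) :
    Nat.Coprime (n / smPart q n) q := by
  by_contra hcon
  obtain ⟨p, hp, hp1, hp2⟩ := Nat.Prime.not_coprime_iff_dvd.mp hcon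
  have hg0 : smPart q n ≠ 0 := (smPart_pos hn).ne'
  have hdvd : smPart q n ∣ n := smPart_dvd q n
  have hquot0 : n / smPart q n ≠ 0 := by
    have := Nat.div_pos (Nat.le_of_dvd (Nat.pos_of_ne_zero hn) hdvd) (smPart_pos hn)
    exact this.ne'
  have hfac : (n / smPart q n).factorization p = 0 := by
    rw [Nat.factorization_div hdvd]
    have hgcd : (smPart q n).factorization = n.factorization ⊓ (q ^ n).factorization :=
      Nat.factorization_gcd hn (pow_ne_zero _ hq)
    have h1 : 1 ≤ q.factorization p := hp.factorization_pos_of_dvd hq hp2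
    have h2 : n.factorization p < n := Nat.factorization_lt p hn
    have h3 : (smPart q n).factorization p = n.factorization p := by
      rw [hgcd]
      simp only [Finsupp.inf_apply, Nat.factorization_pow, Finsupp.smul_apply, smul_eq_mul]
      exact min_eq_left (by nlinarith)
    simp [h3]
  exact absurd hfac (hp.factorization_pos_of_dvd hquot0 hp1).ne'

lemma smPart_unique {q d m : ℕ} (hq : q ≠ 0)
    (hd : d ∈ Nat.factoredNumbers q.primeFactors) (hm : Nat.Coprime m q) (hm0 : m ≠ 0) :
    smPart q (d * m) = d := by
  have hd0 : d ≠ 0 := Nat.ne_zero_of_mem_factoredNumbers hd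
  have h1 : Nat.Coprime m (q ^ (d * m)) := hm.pow_right _
  have h2 : smPart q (d * m) = Nat.gcd d (q ^ (d * m)) :=
    Nat.Coprime.gcd_mul_right_cancel d h1
  rw [h2, Nat.gcd_eq_left]
  exact dvd_pow_of_factored hq hd (Nat.le_mul_of_pos_right d (Nat.pos_of_ne_zero hm0))

lemma sum_decomp {q : ℕ} (hq : q ≠ 0) (g : ℕ → ℂ) (N : ℕ) :
    ∑ n ∈ Icc 1 N, g n =
      ∑ d ∈ (Icc 1 N).filter (· ∈ Nat.factoredNumbers q.primeFactors),
        ∑ m ∈ (Icc 1 (N / d)).filter (fun m => Nat.Coprime m q), g (d * m) := by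
  rw [Finset.sum_sigma' ((Icc 1 N).filter (· ∈ Nat.factoredNumbers q.primeFactors))
      (fun d => (Icc 1 (N / d)).filter (fun m => Nat.Coprime m q)) (fun d m => g (d * m))]
  refine (Finset.sum_nbij' (fun x => x.1 * x.2)
    (fun n => ⟨smPart q n, n / smPart q n⟩) ?_ ?_ ?_ ?_ ?_).symm
  · rintro ⟨d, m⟩ hx
    simp only [Finset.mem_sigma, Finset.mem_filter, Finset.mem_Icc] at hx
    obtain ⟨⟨⟨hd1, hdN⟩, hdS⟩, ⟨hm1, hmN⟩, hmc⟩ := hx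
    simp only [Finset.mem_Icc]
    constructor
    · exact Nat.one_le_iff_ne_zero.mpr (Nat.mul_ne_zero (by omega) (by omega))
    · calc d * m = m * d := mul_comm d m
        _ ≤ N := (Nat.le_div_iff_mul_le (by omega)).mp hmN
  · intro n hn
    simp only [Finset.mem_Icc] at hn
    obtain ⟨hn1, hnN⟩ := hn
    have hn0 : n ≠ 0 := by omega
    simp only [Finset.mem_sigma, Finset.mem_filter, Finset.mem_Icc]
    refine ⟨⟨⟨smPart_pos hn0, ?_⟩, smPart_mem hq hn0⟩, ⟨?_, ?_⟩, smPart_coprime hq hn0⟩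
    · exact le_trans (Nat.le_of_dvd (by omega) (smPart_dvd q n)) hnN
    · exact Nat.one_le_iff_ne_zero.mpr
        (Nat.div_pos (Nat.le_of_dvd (by omega) (smPart_dvd q n)) (smPart_pos hn0)).ne'
    · exact Nat.div_le_div_right hnN
  · rintro ⟨d, m⟩ hx
    simp only [Finset.mem_sigma, Finset.mem_filter, Finset.mem_Icc] at hx
    obtain ⟨⟨⟨hd1, hdN⟩, hdS⟩, ⟨hm1, hmN⟩, hmc⟩ := hx
    have h1 : smPart q (d * m) = d := smPart_unique hq hdS hmc (by omega)
    have h2 : d * m / smPart q (d * m) = m := by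
      rw [h1]; exact Nat.mul_div_cancel_left m (by omega)
    simp only [Sigma.mk.inj_iff]
    exact ⟨h1, heq_of_eq h2⟩
  · intro n hn
    exact Nat.mul_div_cancel' (smPart_dvd q n)
  · rintro ⟨d, m⟩ hx
    rfl

lemma char_expand {q : ℕ} [NeZero q] (W : ZMod q → ℂ) (x : ZMod q) {m : ℕ}
    (hm : Nat.Coprime m q) :
    W (x * (m : ZMod q)) = (q.totient : ℂ)⁻¹ *
      ∑ χ : DirichletCharacter ℂ q,
        (∑ v : (ZMod q)ˣ, W (x * v) * χ ((v : ZMod q)⁻¹)) * χ (m : ZMod q) := by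
  have hswap : ∑ χ : DirichletCharacter ℂ q,
        (∑ v : (ZMod q)ˣ, W (x * v) * χ ((v : ZMod q)⁻¹)) * χ (m : ZMod q)
      = ∑ v : (ZMod q)ˣ, W (x * v) *
          ∑ χ : DirichletCharacter ℂ q, χ ((v : ZMod q)⁻¹) * χ (m : ZMod q) := by
    simp_rw [Finset.sum_mul, Finset.mul_sum, mul_assoc]
    exact Finset.sum_comm
  rw [hswap]
  have horth : ∀ v : (ZMod q)ˣ,
      ∑ χ : DirichletCharacter ℂ q, χ ((v : ZMod q)⁻¹) * χ (m : ZMod q)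
        = if (v : ZMod q) = (m : ZMod q) then (q.totient : ℂ) else 0 := fun v =>
    DirichletCharacter.sum_char_inv_mul_char_eq ℂ v.isUnit (m : ZMod q)
  simp only [horth]
  set v₀ : (ZMod q)ˣ := ZMod.unitOfCoprime m hm with hv₀
  have hv₀coe : (v₀ : ZMod q) = (m : ZMod q) := rfl
  rw [Finset.sum_eq_single v₀]
  · rw [if_pos hv₀coe, hv₀coe]
    have hφ : (q.totient : ℂ) ≠ 0 := by
      exact_mod_cast Nat.cast_ne_zero.mpr (Nat.totient_pos.mpr (Nat.pos_of_ne_zero (NeZero.ne q))).ne'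
    field_simp
  · intro v _ hv
    rw [if_neg, mul_zero]
    intro hcoe
    exact hv (Units.ext (hcoe.trans hv₀coe.symm))
  · intro h
    exact absurd (Finset.mem_univ v₀) h

noncomputable def bcoef {q : ℕ} [NeZero q] (W : ZMod q → ℂ) (d : ℕ) (χ : DirichletCharacter ℂ q) : ℂ :=
  (q.totient : ℂ)⁻¹ * ∑ v : (ZMod q)ˣ, W ((d : ZMod q) * v) * χ ((v : ZMod q)⁻¹)

lemma bcoef_norm_le {q : ℕ} [NeZero q] (W : ZMod q → ℂ) (hW : ∀ r, ‖W r‖ ≤ 1)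
    (d : ℕ) (χ : DirichletCharacter ℂ q) : ‖bcoef W d χ‖ ≤ 1 := by
  have hφ : (0:ℝ) < q.totient := by
    exact_mod_cast Nat.totient_pos.mpr (Nat.pos_of_ne_zero (NeZero.ne q))
  have h1 : ‖∑ v : (ZMod q)ˣ, W ((d : ZMod q) * v) * χ ((v : ZMod q)⁻¹)‖ ≤ q.totient := by
    calc ‖∑ v : (ZMod q)ˣ, W ((d : ZMod q) * v) * χ ((v : ZMod q)⁻¹)‖
        ≤ ∑ v : (ZMod q)ˣ, ‖W ((d : ZMod q) * v) * χ ((v : ZMod q)⁻¹)‖ := norm_sum_le _ _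
      _ ≤ ∑ _v : (ZMod q)ˣ, 1 := Finset.sum_le_sum (fun v _ => by
            rw [norm_mul]
            exact mul_le_one₀ (hW _) (norm_nonneg _) (χ.norm_le_one _))
      _ = Fintype.card (ZMod q)ˣ := by simp
      _ = q.totient := by exact_mod_cast ZMod.card_units_eq_totient q
  rw [bcoef, norm_mul, norm_inv, Complex.norm_natCast]
  rw [inv_mul_le_iff₀ hφ, mul_one]
  exact h1

lemma inner_expand {q : ℕ} [NeZero q] (f : ℕ → ℂ) (W : ZMod q → ℂ) (d M : ℕ) :
    ∑ m ∈ (Icc 1 M).filter (fun m => Nat.Coprime m q),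
        f m * W ((d : ZMod q) * (m : ZMod q))
    = ∑ χ : DirichletCharacter ℂ q,
        bcoef W d χ * ∑ m ∈ Icc 1 M, f m * χ (m : ZMod q) := by
  have h1 : ∀ χ : DirichletCharacter ℂ q,
      ∑ m ∈ Icc 1 M, f m * χ (m : ZMod q)
      = ∑ m ∈ (Icc 1 M).filter (fun m => Nat.Coprime m q), f m * χ (m : ZMod q) := by
    intro χ
    rw [Finset.sum_filter_of_ne]
    intro m _ hne
    by_contra hc
    have hnu : ¬ IsUnit ((m : ℕ) : ZMod q) := fun h => hc ((ZMod.isUnit_iff_coprime m q).mp h)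
    exact hne (by rw [χ.map_nonunit hnu, mul_zero])
  calc ∑ m ∈ (Icc 1 M).filter (fun m => Nat.Coprime m q),
        f m * W ((d : ZMod q) * (m : ZMod q))
      = ∑ m ∈ (Icc 1 M).filter (fun m => Nat.Coprime m q),
          ∑ χ : DirichletCharacter ℂ q, bcoef W d χ * (f m * χ (m : ZMod q)) := by
        refine Finset.sum_congr rfl fun m hm => ?_
        rw [char_expand W (d : ZMod q) (Finset.mem_filter.mp hm).2]
        rw [Finset.mul_sum, Finset.mul_sum]
        refine Finset.sum_congr rfl fun χ _ => ?_
        rw [bcoef]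
        ring
    _ = ∑ χ : DirichletCharacter ℂ q,
          ∑ m ∈ (Icc 1 M).filter (fun m => Nat.Coprime m q),
            bcoef W d χ * (f m * χ (m : ZMod q)) := Finset.sum_comm
    _ = ∑ χ : DirichletCharacter ℂ q,
        bcoef W d χ * ∑ m ∈ Icc 1 M, f m * χ (m : ZMod q) := by
        refine Finset.sum_congr rfl fun χ _ => ?_
        rw [h1 χ, Finset.mul_sum]

lemma smooth_tail {q : ℕ} (hq : q ≠ 0) {ε : ℝ} (hε : 0 < ε) :
    ∃ D : ℕ, ∀ F : Finset ℕ,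
      (∀ d ∈ F, d ∈ Nat.factoredNumbers q.primeFactors ∧ D < d) →
      ∑ d ∈ F, ((d : ℝ))⁻¹ < ε := by
  have hsum : Summable (fun m : Nat.factoredNumbers q.primeFactors => (((m : ℕ) : ℝ))⁻¹) := by
    have := (EulerProduct.summable_and_hasSum_factoredNumbers_prod_filter_prime_tsum
      (f := fun n : ℕ => ((n : ℝ))⁻¹) (by norm_num)
      (fun {m n} _ => by push_cast; rw [mul_inv])
      (fun {p} hp => ?_) q.primeFactors).1
    · exact this.of_norm
    · have h2 : (2:ℝ) ≤ p := by exact_mod_cast hp.two_le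
      have heq : ∀ n : ℕ, ‖(((p ^ n : ℕ) : ℝ))⁻¹‖ = ((p:ℝ)⁻¹) ^ n := by
        intro n
        push_cast
        rw [← inv_pow, Real.norm_eq_abs, abs_of_nonneg (by positivity)]
      refine Summable.congr ?_ (fun n => (heq n).symm)
      refine summable_geometric_of_lt_one (by positivity) ?_
      rw [inv_lt_one_iff₀]; right; linarith
  obtain ⟨s₀, hs₀⟩ := summable_iff_vanishing.mp hsum (Set.Iio ε) (Iio_mem_nhds hε)
  refine ⟨s₀.sup (fun m => (m : ℕ)), fun F hF => ?_⟩
  set t : Finset (Nat.factoredNumbers q.primeFactors) :=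
    F.attach.image (fun x => (⟨x.1, (hF x.1 x.2).1⟩ : Nat.factoredNumbers q.primeFactors))
  have hdisj : Disjoint t s₀ := by
    rw [Finset.disjoint_left]
    rintro x hxt hxs
    simp only [t, Finset.mem_image, Finset.mem_attach, true_and] at hxt
    obtain ⟨a, ha⟩ := hxt
    have h1 : (x : ℕ) = a.1 := by rw [← ha]
    have h2 : s₀.sup (fun m => (m : ℕ)) < a.1 := (hF a.1 a.2).2
    have h3 : (x : ℕ) ≤ s₀.sup (fun m => (m : ℕ)) := Finset.le_sup hxs
    omega
  have hsumt : ∑ x ∈ t, (((x : ℕ) : ℝ))⁻¹ = ∑ d ∈ F, ((d : ℝ))⁻¹ := by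
    rw [Finset.sum_image]
    · rw [Finset.sum_attach F (fun d => ((d : ℝ))⁻¹)]
    · rintro a _ b _ hab
      exact Subtype.ext (by simpa using congrArg Subtype.val hab)
  have := hs₀ t hdisj
  rw [Set.mem_Iio] at this
  rw [← hsumt]
  exact this

lemma mean_zero_periodic (f : ℕ → ℂ)
    (hmult : ∀ m n : ℕ, Nat.Coprime m n → f (m * n) = f m * f n)
    (hbd : ∀ n : ℕ, ‖f n‖ ≤ 1)
    (hχ : ∀ (q : ℕ) (χ : DirichletCharacter ℂ q),
        Tendsto (fun N : ℕ => (∑ n ∈ Icc 1 N, f n * χ (n : ZMod q)) / (N : ℂ))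
          atTop (nhds 0))
    (q : ℕ) (hq : q ≠ 0) (w : ℕ → ℂ) (hw : ∀ n, w (n + q) = w n)
    (hwb : ∀ n, ‖w n‖ ≤ 1) :
    Tendsto (fun N : ℕ => (∑ n ∈ Icc 1 N, f n * w n) / (N : ℂ)) atTop (nhds 0) := by
  haveI : NeZero q := ⟨hq⟩
  set S := Nat.factoredNumbers q.primeFactors with hSdef
  set W : ZMod q → ℂ := fun r => w r.val with hWdef
  have hWb : ∀ r, ‖W r‖ ≤ 1 := fun r => hwb _
  have hwW : ∀ n : ℕ, w n = W ((n : ℕ) : ZMod q) := by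
    intro n
    have hper : Function.Periodic w q := hw
    show w n = w (((n : ℕ) : ZMod q)).val
    rw [ZMod.val_natCast]
    exact (hper.map_mod_nat n).symm
  set Sc : DirichletCharacter ℂ q → ℕ → ℂ :=
    fun χ M => ∑ m ∈ Icc 1 M, f m * χ (m : ZMod q) with hScdef
  have hScLip : ∀ (χ : DirichletCharacter ℂ q) (M : ℕ), ‖Sc χ M‖ ≤ (M : ℝ) := by
    intro χ M
    refine aux_norm_sum_le fun n => ?_
    rw [norm_mul]
    exact mul_le_one₀ (hbd n) (norm_nonneg _) (χ.norm_le_one _)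
  -- the key identity
  have key : ∀ N : ℕ, ∑ n ∈ Icc 1 N, f n * w n
      = ∑ d ∈ (Icc 1 N).filter (· ∈ S),
          f d * ∑ χ : DirichletCharacter ℂ q, bcoef W d χ * Sc χ (N / d) := by
    intro N
    rw [sum_decomp hq (fun n => f n * w n) N]
    refine Finset.sum_congr rfl fun d hd => ?_
    obtain ⟨_, hdS⟩ := Finset.mem_filter.mp hd
    rw [← inner_expand f W d (N / d), Finset.mul_sum]
    refine Finset.sum_congr rfl fun m hm => ?_
    obtain ⟨_, hmc⟩ := Finset.mem_filter.mp hm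
    have hdm : Nat.Coprime d m := by
      have h1 : Nat.Coprime m (q ^ d) := Nat.Coprime.pow_right _ hmc
      have h2 : d ∣ q ^ d := dvd_pow_of_factored hq hdS le_rfl
      exact (Nat.Coprime.coprime_dvd_right h2 h1).symm
    rw [hmult d m hdm, hwW (d * m)]
    push_cast
    ring
  -- the limit
  rw [NormedAddCommGroup.tendsto_nhds_zero]
  intro ε hε
  set K := Fintype.card (DirichletCharacter ℂ q) with hKdef
  set ε' := ε / (2 * (K + 1)) with hε'def
  have hε' : 0 < ε' := by positivity
  obtain ⟨D, hD⟩ := smooth_tail hq hε'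
  set G : ℕ → ℝ := fun N => ∑ d ∈ (Icc 1 D).filter (· ∈ S),
      ∑ χ : DirichletCharacter ℂ q, ‖Sc χ (N / d)‖ with hGdef
  have hmain : Tendsto (fun N : ℕ => G N / (N : ℝ)) atTop (nhds 0) := by
    have heq : ∀ N : ℕ, G N / (N:ℝ) = ∑ d ∈ (Icc 1 D).filter (· ∈ S),
        ∑ χ : DirichletCharacter ℂ q, ‖Sc χ (N / d)‖ / (N:ℝ) := by
      intro N
      rw [hGdef]
      simp only [Finset.sum_div]
    rw [funext heq]
    have h0 : (0:ℝ) = ∑ d ∈ (Icc 1 D).filter (· ∈ S),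
        ∑ _χ : DirichletCharacter ℂ q, (0:ℝ) := by simp
    rw [h0]
    refine tendsto_finset_sum _ fun d _ => tendsto_finset_sum _ fun χ _ => ?_
    have h1 := aux_tendsto_comp (Sc χ) 1 (hScLip χ) (hχ q χ)
      (fun N => N / d) (fun N => le_trans (Nat.div_le_self N d) (by omega))
    have h2 := h1.norm
    rw [norm_zero] at h2
    refine h2.congr fun N => ?_
    rw [norm_div, Complex.norm_natCast]
  -- the bound
  have hbound : ∀ N : ℕ, 1 ≤ N →
      ‖(∑ n ∈ Icc 1 N, f n * w n) / (N : ℂ)‖ ≤ G N / (N:ℝ) + (K:ℝ) * ε' := by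
    intro N hN
    have hNpos : (0:ℝ) < N := by exact_mod_cast hN
    have core : ‖∑ n ∈ Icc 1 N, f n * w n‖ ≤ G N + (K:ℝ) * ε' * N := by
      rw [key N]
      set DN := (Icc 1 N).filter (· ∈ S) with hDNdef
      have step1 : ‖∑ d ∈ DN, f d * ∑ χ : DirichletCharacter ℂ q, bcoef W d χ * Sc χ (N/d)‖
          ≤ ∑ d ∈ DN, ∑ χ : DirichletCharacter ℂ q, ‖Sc χ (N/d)‖ := by
        refine le_trans (norm_sum_le _ _) (Finset.sum_le_sum fun d _ => ?_)
        rw [norm_mul]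
        calc ‖f d‖ * ‖∑ χ : DirichletCharacter ℂ q, bcoef W d χ * Sc χ (N/d)‖
            ≤ 1 * ‖∑ χ : DirichletCharacter ℂ q, bcoef W d χ * Sc χ (N/d)‖ :=
              mul_le_mul_of_nonneg_right (hbd d) (norm_nonneg _)
          _ = ‖∑ χ : DirichletCharacter ℂ q, bcoef W d χ * Sc χ (N/d)‖ := one_mul _
          _ ≤ ∑ χ : DirichletCharacter ℂ q, ‖bcoef W d χ * Sc χ (N/d)‖ := norm_sum_le _ _
          _ ≤ ∑ χ : DirichletCharacter ℂ q, ‖Sc χ (N/d)‖ :=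
              Finset.sum_le_sum fun χ _ => by
                rw [norm_mul]
                exact mul_le_of_le_one_left (norm_nonneg _) (bcoef_norm_le W hWb d χ)
      have split : ∑ d ∈ DN, ∑ χ : DirichletCharacter ℂ q, ‖Sc χ (N/d)‖
          = ∑ d ∈ DN.filter (· ≤ D), (∑ χ : DirichletCharacter ℂ q, ‖Sc χ (N/d)‖)
            + ∑ d ∈ DN.filter (fun d => ¬ d ≤ D), (∑ χ : DirichletCharacter ℂ q, ‖Sc χ (N/d)‖) :=
        (Finset.sum_filter_add_sum_filter_not DN (· ≤ D) _).symm
      have hpart1 : ∑ d ∈ DN.filter (· ≤ D), (∑ χ : DirichletCharacter ℂ q, ‖Sc χ (N/d)‖)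
          ≤ G N := by
        refine Finset.sum_le_sum_of_subset_of_nonneg ?_
          (fun i _ _ => Finset.sum_nonneg fun _ _ => norm_nonneg _)
        intro d hd
        simp only [hDNdef, Finset.mem_filter, Finset.mem_Icc] at hd ⊢
        exact ⟨⟨hd.1.1.1, hd.2⟩, hd.1.2⟩
      have hpart2 : ∑ d ∈ DN.filter (fun d => ¬ d ≤ D),
          (∑ χ : DirichletCharacter ℂ q, ‖Sc χ (N/d)‖) ≤ (K:ℝ) * ε' * N := by
        have h1 : ∀ d ∈ DN.filter (fun d => ¬ d ≤ D),
            (∑ χ : DirichletCharacter ℂ q, ‖Sc χ (N/d)‖) ≤ (K:ℝ) * ((N:ℝ) * ((d:ℝ))⁻¹) := by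
          intro d hd
          calc ∑ χ : DirichletCharacter ℂ q, ‖Sc χ (N/d)‖
              ≤ ∑ _χ : DirichletCharacter ℂ q, ((N/d : ℕ) : ℝ) :=
                Finset.sum_le_sum fun χ _ => hScLip χ _
            _ = (K:ℝ) * ((N/d : ℕ) : ℝ) := by
                rw [Finset.sum_const, Finset.card_univ, nsmul_eq_mul, hKdef]
            _ ≤ (K:ℝ) * ((N:ℝ) * ((d:ℝ))⁻¹) := by
                refine mul_le_mul_of_nonneg_left ?_ (Nat.cast_nonneg K)
                have := Nat.cast_div_le (α := ℝ) (m := N) (n := d)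
                rwa [div_eq_mul_inv] at this
        have h2 : ∑ d ∈ DN.filter (fun d => ¬ d ≤ D), ((d:ℝ))⁻¹ < ε' := by
          refine hD _ fun d hd => ?_
          simp only [hDNdef, Finset.mem_filter, Finset.mem_Icc] at hd
          exact ⟨hd.1.2, by omega⟩
        calc ∑ d ∈ DN.filter (fun d => ¬ d ≤ D), (∑ χ : DirichletCharacter ℂ q, ‖Sc χ (N/d)‖)
            ≤ ∑ d ∈ DN.filter (fun d => ¬ d ≤ D), (K:ℝ) * ((N:ℝ) * ((d:ℝ))⁻¹) :=
              Finset.sum_le_sum h1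
          _ = (K:ℝ) * (N:ℝ) * ∑ d ∈ DN.filter (fun d => ¬ d ≤ D), ((d:ℝ))⁻¹ := by
              rw [Finset.mul_sum]
              refine Finset.sum_congr rfl fun d _ => by ring
          _ ≤ (K:ℝ) * (N:ℝ) * ε' := by
              refine mul_le_mul_of_nonneg_left h2.le (by positivity)
          _ = (K:ℝ) * ε' * N := by ring
      calc ‖∑ d ∈ DN, f d * ∑ χ : DirichletCharacter ℂ q, bcoef W d χ * Sc χ (N/d)‖
          ≤ ∑ d ∈ DN, ∑ χ : DirichletCharacter ℂ q, ‖Sc χ (N/d)‖ := step1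
        _ = _ + _ := split
        _ ≤ G N + (K:ℝ) * ε' * N := add_le_add hpart1 hpart2
    rw [norm_div, Complex.norm_natCast]
    rw [div_le_iff₀ hNpos]
    calc ‖∑ n ∈ Icc 1 N, f n * w n‖ ≤ G N + (K:ℝ) * ε' * N := core
      _ = (G N / (N:ℝ)) * N + (K:ℝ) * ε' * N := by
          rw [div_mul_cancel₀ _ hNpos.ne']
      _ = (G N / (N:ℝ) + (K:ℝ) * ε') * N := by ring
  -- conclude
  have hKε' : (K:ℝ) * ε' < ε := by
    rw [hε'def]
    have hK0 : (0:ℝ) ≤ K := Nat.cast_nonneg K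
    have h2 : (0:ℝ) < 2 * ((K:ℝ) + 1) := by positivity
    rw [mul_div_assoc', div_lt_iff₀ h2]
    nlinarith
  have hpos2 : 0 < ε - (K:ℝ) * ε' := by linarith
  rw [NormedAddCommGroup.tendsto_nhds_zero] at hmain
  filter_upwards [hmain _ hpos2, eventually_ge_atTop 1] with N h1 h2
  calc ‖(∑ n ∈ Icc 1 N, f n * w n) / (N : ℂ)‖ ≤ G N / (N:ℝ) + (K:ℝ) * ε' := hbound N h2
    _ < (ε - (K:ℝ) * ε') + (K:ℝ) * ε' := by
        have := le_abs_self (G N / (N:ℝ))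
        rw [Real.norm_eq_abs] at h1
        linarith
    _ = ε := by ring

lemma aux_const_div (c : ℂ) : Tendsto (fun N : ℕ => c / (N : ℂ)) atTop (nhds 0) := by
  rw [NormedAddCommGroup.tendsto_nhds_zero]
  intro ε hε
  obtain ⟨N₀, hN₀⟩ := exists_nat_gt (‖c‖ / ε)
  filter_upwards [eventually_ge_atTop (max N₀ 1)] with N hN
  have h1 : (1:ℕ) ≤ N := le_trans (le_max_right _ _) hN
  have hNpos : (0:ℝ) < N := by exact_mod_cast h1
  rw [norm_div, Complex.norm_natCast, div_lt_iff₀ hNpos]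
  have h2 : (N₀:ℝ) ≤ N := by exact_mod_cast le_trans (le_max_left _ _) hN
  rw [div_lt_iff₀ hε] at hN₀
  nlinarith

lemma dir2a (f : ℕ → ℂ)
    (hmult : ∀ m n : ℕ, Nat.Coprime m n → f (m * n) = f m * f n)
    (hbd : ∀ n : ℕ, ‖f n‖ ≤ 1)
    (hχ : ∀ (q : ℕ) (χ : DirichletCharacter ℂ q),
        Tendsto (fun N : ℕ => (∑ n ∈ Icc 1 N, f n * χ (n : ZMod q)) / (N : ℂ))
          atTop (nhds 0))
    (p q : ℕ) (hq : 1 ≤ q) :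
    Tendsto (fun N : ℕ => (∑ n ∈ Finset.Icc 1 N,
        f n * Complex.exp (2 * Real.pi * Complex.I * (n : ℂ) * (p : ℂ) / (q : ℂ)))
      / (N : ℂ)) atTop (nhds 0) := by
  have hq0 : (q : ℂ) ≠ 0 := Nat.cast_ne_zero.mpr (by omega)
  refine mean_zero_periodic f hmult hbd hχ q (by omega)
    (fun n => Complex.exp (2 * Real.pi * Complex.I * (n : ℂ) * (p : ℂ) / (q : ℂ))) ?_ ?_
  · intro n
    have harg : 2 * (Real.pi : ℂ) * Complex.I * ((n + q : ℕ) : ℂ) * (p : ℂ) / (q : ℂ)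
        = 2 * (Real.pi : ℂ) * Complex.I * (n : ℂ) * (p : ℂ) / (q : ℂ)
          + ((p : ℤ) : ℂ) * (2 * (Real.pi : ℂ) * Complex.I) := by
      push_cast
      field_simp
    rw [harg, Complex.exp_add, Complex.exp_int_mul_two_pi_mul_I, mul_one]
  · intro n
    have harg : 2 * (Real.pi : ℂ) * Complex.I * (n : ℂ) * (p : ℂ) / (q : ℂ)
        = ((2 * Real.pi * n * p / q : ℝ) : ℂ) * Complex.I := by
      push_cast
      field_simp
    rw [harg, Complex.norm_exp_ofReal_mul_I]

lemma dir2b (f : ℕ → ℂ)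
    (hmult : ∀ m n : ℕ, Nat.Coprime m n → f (m * n) = f m * f n)
    (hbd : ∀ n : ℕ, ‖f n‖ ≤ 1)
    (hχ : ∀ (q : ℕ) (χ : DirichletCharacter ℂ q),
        Tendsto (fun N : ℕ => (∑ n ∈ Icc 1 N, f n * χ (n : ZMod q)) / (N : ℂ))
          atTop (nhds 0))
    (a b : ℕ) (ha : 1 ≤ a) (hb : 1 ≤ b) :
    Tendsto (fun N : ℕ => (∑ n ∈ Finset.Icc 1 N, f (a * n + b)) / (N : ℂ))
      atTop (nhds 0) := by
  classical
  set w : ℕ → ℂ := fun n => if n % a = b % a then (1:ℂ) else 0 with hwdef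
  have hwper : ∀ n, w (n + a) = w n := by
    intro n
    simp only [hwdef, Nat.add_mod_right]
  have hwb : ∀ n, ‖w n‖ ≤ 1 := by
    intro n
    simp only [hwdef]
    split <;> simp
  set T : ℕ → ℂ := fun M => ∑ n ∈ Icc 1 M, f n * w n with hTdef
  have hT : Tendsto (fun M : ℕ => T M / (M : ℂ)) atTop (nhds 0) :=
    mean_zero_periodic f hmult hbd hχ a (by omega) w hwper hwb
  have hTLip : ∀ M : ℕ, ‖T M‖ ≤ (M : ℝ) := by
    intro M
    refine aux_norm_sum_le fun n => ?_
    rw [norm_mul]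
    exact mul_le_one₀ (hbd n) (norm_nonneg _) (hwb n)
  -- key identity
  have key : ∀ N : ℕ, ∑ n ∈ Icc 1 N, f (a * n + b) = T (a * N + b) - T b := by
    intro N
    have hsplit : T b + ∑ n ∈ Ioc b (a * N + b), f n * w n = T (a * N + b) := by
      rw [hTdef]
      simp only [← Finset.Icc_add_one_left_eq_Ioc]
      rw [Finset.Icc_add_one_left_eq_Ioc, show (1:ℕ) = 0 + 1 from rfl, Finset.Icc_add_one_left_eq_Ioc, Finset.Icc_add_one_left_eq_Ioc]
      exact sum_Ioc_consecutive (fun n => f n * w n) (Nat.zero_le b) (Nat.le_add_left b (a * N))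
    have hfil : ∑ n ∈ Ioc b (a * N + b), f n * w n
        = ∑ n ∈ (Ioc b (a * N + b)).filter (fun n => n % a = b % a), f n := by
      rw [Finset.sum_filter]
      refine Finset.sum_congr rfl fun n _ => ?_
      simp only [hwdef, mul_ite, mul_one, mul_zero]
    have hbij : ∑ n ∈ (Ioc b (a * N + b)).filter (fun n => n % a = b % a), f n
        = ∑ n ∈ Icc 1 N, f (a * n + b) := by
      refine Finset.sum_nbij' (fun k => (k - b) / a) (fun n => a * n + b) ?_ ?_ ?_ ?_ ?_
      · intro k hk
        simp only [Finset.mem_filter, Finset.mem_Ioc] at hk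
        obtain ⟨⟨hk1, hk2⟩, hk3⟩ := hk
        have hdvd : a ∣ k - b := (Nat.modEq_iff_dvd' (by omega)).mp hk3.symm
        obtain ⟨c, hc⟩ := hdvd
        have hc1 : 1 ≤ c := by
          rcases Nat.eq_zero_or_pos c with rfl | h
          · omega
          · exact h
        have hcN : c ≤ N := by
          have : a * c ≤ a * N := by omega
          exact Nat.le_of_mul_le_mul_left this (by omega)
        have : (k - b) / a = c := by rw [hc, Nat.mul_div_cancel_left c (by omega)]
        rw [this]
        simp only [Finset.mem_Icc]
        omega
      · intro n hn
        simp only [Finset.mem_Icc] at hn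
        simp only [Finset.mem_filter, Finset.mem_Ioc]
        have hx1 : 1 * 1 ≤ a * n := Nat.mul_le_mul ha hn.1
        have hx2 : a * n ≤ a * N := Nat.mul_le_mul_left a hn.2
        refine ⟨⟨by omega, by omega⟩, ?_⟩
        rw [add_comm]
        exact Nat.add_mul_mod_self_left b a n
      · intro k hk
        simp only [Finset.mem_filter, Finset.mem_Ioc] at hk
        obtain ⟨⟨hk1, hk2⟩, hk3⟩ := hk
        have hdvd : a ∣ k - b := (Nat.modEq_iff_dvd' (by omega)).mp hk3.symm
        obtain ⟨c, hc⟩ := hdvd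
        have : (k - b) / a = c := by rw [hc, Nat.mul_div_cancel_left c (by omega)]
        rw [this]
        omega
      · intro n hn
        rw [Nat.add_sub_cancel, Nat.mul_div_cancel_left n (by omega)]
      · intro k hk
        simp only [Finset.mem_filter, Finset.mem_Ioc] at hk
        obtain ⟨⟨hk1, hk2⟩, hk3⟩ := hk
        have hdvd : a ∣ k - b := (Nat.modEq_iff_dvd' (by omega)).mp hk3.symm
        obtain ⟨c, hc⟩ := hdvd
        have : (k - b) / a = c := by rw [hc, Nat.mul_div_cancel_left c (by omega)]
        rw [this]
        congr 1
        omega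
    rw [← hsplit, hfil, hbij]
    ring
  -- limit
  have h1 : Tendsto (fun N : ℕ => T (a * N + b) / (N : ℂ)) atTop (nhds 0) := by
    refine aux_tendsto_comp T (a + b) hTLip hT (fun N => a * N + b) (fun N => ?_)
    have h2 : (a + b) * N + (a + b) = a * N + (b * N + a + b) := by ring
    rw [h2]
    exact Nat.add_le_add_left (by omega) _
  have h2 : Tendsto (fun N : ℕ => T b / (N : ℂ)) atTop (nhds 0) := aux_const_div _
  have h3 := h1.sub h2
  rw [sub_zero] at h3
  refine h3.congr fun N => ?_
  rw [key N, sub_div]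

lemma dir1 (f : ℕ → ℂ)
    (hbd : ∀ n : ℕ, ‖f n‖ ≤ 1)
    (hAP : ∀ a b : ℕ, 1 ≤ a → 1 ≤ b →
        Tendsto (fun N : ℕ => (∑ n ∈ Finset.Icc 1 N, f (a * n + b)) / (N : ℂ))
          atTop (nhds 0))
    (q : ℕ) (χ : DirichletCharacter ℂ q) :
    Tendsto (fun N : ℕ => (∑ n ∈ Finset.Icc 1 N, f n * χ (n : ZMod q)) / (N : ℂ))
      atTop (nhds 0) := by
  classical
  rcases Nat.eq_zero_or_pos q with rfl | hq
  · -- q = 0 : character vanishes except at 1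
    have heq : ∀ N : ℕ, 1 ≤ N →
        ∑ n ∈ Icc 1 N, f n * χ (n : ZMod 0) = f 1 * χ ((1 : ℕ) : ZMod 0) := by
      intro N hN
      refine Finset.sum_eq_single_of_mem 1 (Finset.mem_Icc.mpr ⟨le_refl 1, hN⟩) ?_
      intro n hn hne
      have hnu : ¬ IsUnit ((n : ℕ) : ZMod 0) := by
        intro h
        have h2 : IsUnit ((n : ℕ) : ℤ) := h
        rcases Int.isUnit_iff.mp h2 with h1 | h1
        · exact hne (by exact_mod_cast h1)
        · omega
      rw [χ.map_nonunit hnu, mul_zero]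
    refine Tendsto.congr' ?_ (aux_const_div (f 1 * χ ((1 : ℕ) : ZMod 0)))
    filter_upwards [eventually_ge_atTop 1] with N hN
    rw [heq N hN]
  · -- q ≥ 1
    set F : ℕ → ℕ := fun n => if n % q = 0 then q else n % q with hFdef
    set Ar : ℕ → ℕ → ℂ := fun r N => ∑ m ∈ Icc 1 ((N - r) / q), f (q * m + r) with hArdef
    have key : ∀ N : ℕ, q ≤ N → ∑ n ∈ Icc 1 N, f n * χ (n : ZMod q)
        = ∑ r ∈ Icc 1 q, (χ (r : ZMod q) * f r + χ (r : ZMod q) * Ar r N) := by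
      intro N hN
      have hmaps : ∀ n ∈ Icc 1 N, F n ∈ Icc 1 q := by
        intro n hn
        simp only [hFdef, Finset.mem_Icc]
        split
        · omega
        · have := Nat.mod_lt n (show 0 < q by omega)
          omega
      rw [← Finset.sum_fiberwise_of_maps_to hmaps (fun n => f n * χ (n : ZMod q))]
      refine Finset.sum_congr rfl fun r hr => ?_
      simp only [Finset.mem_Icc] at hr
      obtain ⟨hr1, hr2⟩ := hr
      -- facts about the fiber
      have hfib : ∀ n, n ∈ (Icc 1 N).filter (fun n => F n = r) →
          r ≤ n ∧ n % q = r % q := by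
        intro n hn
        simp only [Finset.mem_filter, Finset.mem_Icc, hFdef] at hn
        obtain ⟨⟨hn1, hn2⟩, hn3⟩ := hn
        by_cases h0 : n % q = 0
        · rw [if_pos h0] at hn3
          subst hn3
          have : q ∣ n := Nat.dvd_of_mod_eq_zero h0
          have := Nat.le_of_dvd (by omega) this
          constructor
          · omega
          · rw [h0, Nat.mod_self]
        · rw [if_neg h0] at hn3
          have := Nat.mod_le n q
          have hlt := Nat.mod_lt n (show 0 < q by omega)
          constructor
          · omega
          · rw [← hn3, Nat.mod_mod_of_dvd]
            exact dvd_refl q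
      have hround : ∀ n, n ∈ (Icc 1 N).filter (fun n => F n = r) →
          q * ((n - r) / q) + r = n := by
        intro n hn
        obtain ⟨hle, hmod⟩ := hfib n hn
        have hdvd : q ∣ n - r := (Nat.modEq_iff_dvd' hle).mp hmod.symm
        obtain ⟨c, hc⟩ := hdvd
        have : (n - r) / q = c := by rw [hc, Nat.mul_div_cancel_left c (by omega)]
        rw [this]
        omega
      have hstep : ∑ n ∈ (Icc 1 N).filter (fun n => F n = r), f n * χ (n : ZMod q)
          = ∑ m ∈ Icc 0 ((N - r) / q), f (q * m + r) * χ ((q * m + r : ℕ) : ZMod q) := by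
        refine Finset.sum_nbij' (fun n => (n - r) / q) (fun m => q * m + r) ?_ ?_ ?_ ?_ ?_
        · intro n hn
          simp only [Finset.mem_filter, Finset.mem_Icc] at hn
          simp only [Finset.mem_Icc]
          exact ⟨Nat.zero_le _, Nat.div_le_div_right (Nat.sub_le_sub_right hn.1.2 r)⟩
        · intro m hm
          simp only [Finset.mem_Icc] at hm
          have hmul : m * q ≤ N - r := (Nat.le_div_iff_mul_le (by omega)).mp hm.2
          simp only [Finset.mem_filter, Finset.mem_Icc]
          have hmod : (q * m + r) % q = r % q := by
            rw [add_comm, Nat.add_mul_mod_self_left]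
          have hcomm : q * m = m * q := Nat.mul_comm q m
          refine ⟨⟨by omega, by omega⟩, ?_⟩
          simp only [hFdef]
          rw [hmod]
          rcases eq_or_lt_of_le hr2 with rfl | hlt
          · simp [Nat.mod_self]
          · rw [Nat.mod_eq_of_lt hlt, if_neg (by omega)]
        · intro n hn
          exact hround n hn
        · intro m hm
          rw [Nat.add_sub_cancel, Nat.mul_div_cancel_left m (by omega)]
        · intro n hn
          rw [hround n hn]
      rw [hstep]
      have hcast : ∀ m : ℕ, ((q * m + r : ℕ) : ZMod q) = (r : ZMod q) := by
        intro m
        push_cast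
        rw [ZMod.natCast_self]
        ring
      have h00 : (0:ℕ) ∉ Icc 1 ((N - r) / q) := by simp
      have hins : ∀ M : ℕ, Icc 0 M = insert 0 (Icc 1 M) := by
        intro M; ext x; simp only [Finset.mem_Icc, Finset.mem_insert]; omega
      rw [hins]
      rw [Finset.sum_insert h00]
      simp only [hcast, Nat.mul_zero, Nat.zero_add]
      rw [hArdef]
      simp only []
      rw [Finset.mul_sum]
      rw [Finset.sum_congr rfl (fun m _ => by ring : ∀ m ∈ Icc 1 ((N - r) / q),
        f (q * m + r) * χ (r : ZMod q) = χ (r : ZMod q) * f (q * m + r))]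
      ring
    -- limits
    have hA : ∀ r : ℕ, 1 ≤ r → r ≤ q →
        Tendsto (fun N : ℕ => Ar r N / (N : ℂ)) atTop (nhds 0) := by
      intro r h1 h2
      exact aux_tendsto_comp (fun M => ∑ m ∈ Icc 1 M, f (q * m + r)) 1
        (fun M => aux_norm_sum_le (fun n => hbd _)) (hAP q r (by omega) h1)
        (fun N => (N - r) / q) (fun N => by
          have := Nat.div_le_self (N - r) q
          omega)
    have htot : Tendsto (fun N : ℕ => ∑ r ∈ Icc 1 q,
        (χ (r : ZMod q) * f r / (N : ℂ) + χ (r : ZMod q) * (Ar r N / (N : ℂ))))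
        atTop (nhds 0) := by
      rw [show (0:ℂ) = ∑ r ∈ Icc 1 q, ((0:ℂ) + 0) from by simp]
      refine tendsto_finset_sum _ fun r hr => Tendsto.add (aux_const_div _) ?_
      simp only [Finset.mem_Icc] at hr
      have := (hA r hr.1 hr.2).const_mul (χ (r : ZMod q))
      rwa [mul_zero] at this
    refine Tendsto.congr' ?_ htot
    filter_upwards [eventually_ge_atTop q] with N hN
    rw [key N hN, Finset.sum_div]
    refine Finset.sum_congr rfl fun r _ => ?_
    rw [add_div]
    ring

/-- Equivalence between aperiodicity of a bounded multiplicative function (zero mean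
along every infinite arithmetic progression) and orthogonality to all Dirichlet
characters; the converse direction also yields zero mean against all rational
phases `e(np/q)`. -/
theorem stmt_18 (f : ℕ → ℂ)
    (hmult : ∀ m n : ℕ, Nat.Coprime m n → f (m * n) = f m * f n)
    (hbd : ∀ n : ℕ, ‖f n‖ ≤ 1) :
    ((∀ a b : ℕ, 1 ≤ a → 1 ≤ b →
        Tendsto (fun N : ℕ => (∑ n ∈ Finset.Icc 1 N, f (a * n + b)) / (N : ℂ))
          atTop (nhds 0)) →
      ∀ (q : ℕ) (χ : DirichletCharacter ℂ q),
        Tendsto (fun N : ℕ => (∑ n ∈ Finset.Icc 1 N, f n * χ (n : ZMod q)) / (N : ℂ))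
          atTop (nhds 0)) ∧
    ((∀ (q : ℕ) (χ : DirichletCharacter ℂ q),
        Tendsto (fun N : ℕ => (∑ n ∈ Finset.Icc 1 N, f n * χ (n : ZMod q)) / (N : ℂ))
          atTop (nhds 0)) →
      (∀ p q : ℕ, 1 ≤ q →
          Tendsto (fun N : ℕ => (∑ n ∈ Finset.Icc 1 N,
              f n * Complex.exp (2 * Real.pi * Complex.I * (n : ℂ) * (p : ℂ) / (q : ℂ)))
            / (N : ℂ)) atTop (nhds 0)) ∧
        (∀ a b : ℕ, 1 ≤ a → 1 ≤ b →
          Tendsto (fun N : ℕ => (∑ n ∈ Finset.Icc 1 N, f (a * n + b)) / (N : ℂ))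
            atTop (nhds 0))) := by
  refine ⟨fun hAP q χ => dir1 f hbd hAP q χ,
    fun hχ => ⟨fun p q hq => dir2a f hmult hbd hχ p q hq,
      fun a b ha hb => dir2b f hmult hbd hχ a b ha hb⟩⟩
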